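/- Fix a subset I ⊆ J such that Σ_{k ∈ π₁(I)} (N_k − d_k) d_k + Σ_{j ∈ π₂(I)} (M_j − d_j) d_j < Σ_{(k,j) ∈ I} d_k d_j, and fix arbitrary matrices H²_{kj}, H³_{kj}, H⁴_{kj} for all (k,j) ∈ I. Then there exists a nonzero polynomial p in the entries of the matrices (H¹_{kj})_{(k,j)∈I} (nonzero element of the multivariate polynomial ring over ℂ in those variables) such that: for every choice of matrices (H¹_{kj})_{(k,j)∈I}, if the reduced interference-alignment system on I has a solution (Ū_k, V̄_k), then p vanishes at the entries of (H¹_{kj})_{(k,j)∈I}. -/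

import Mathlib

open Matrix

open MvPolynomial in
private theorem key_dep {σ τ : Type*} [Fintype σ] [Fintype τ] [DecidableEq τ]
    (f : τ → MvPolynomial σ ℂ) (hdeg : ∀ i, (f i).totalDegree ≤ 2)
    (hcard : Fintype.card σ < Fintype.card τ) :
    ∃ p : MvPolynomial τ ℂ, p ≠ 0 ∧ MvPolynomial.aeval f p = 0 := by
  classical
  set n := Fintype.card σ with hn
  set m := Fintype.card τ with hm
  set s := (2 * m + 1) ^ n with hs
  set t := m * s with ht
  set α : (τ → Fin (s + 1)) → (τ →₀ ℕ) :=
    fun b => Finsupp.equivFunOnFinite.symm fun i => (b i : ℕ) with hα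
  have hαapp : ∀ b i, α b i = (b i : ℕ) := fun b i => rfl
  have hαinj : Function.Injective α := by
    intro b b' h
    funext i
    have := congrArg (fun g => (Finsupp.equivFunOnFinite g) i) h
    simpa [hα, Fin.ext_iff] using this
  have hαsum : ∀ b, ((α b).sum fun _ e => e) ≤ t := by
    intro b
    rw [Finsupp.sum_fintype _ _ (fun _ => rfl)]
    calc ∑ i, (α b) i ≤ ∑ _i : τ, s := by
          refine Finset.sum_le_sum fun i _ => ?_
          simpa [hαapp] using Fin.is_le (b i)
      _ = m * s := by simp [hm, mul_comm]
  set g : (τ → Fin (s + 1)) → MvPolynomial σ ℂ :=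
    fun b => MvPolynomial.aeval f (MvPolynomial.monomial (α b) (1:ℂ)) with hg
  have hgdeg : ∀ b, (g b).totalDegree ≤ 2 * t := by
    intro b
    rw [hg]
    simp only [aeval_monomial, _root_.map_one, one_mul]
    calc ((α b).prod fun i k => f i ^ k).totalDegree
        ≤ ∑ i ∈ (α b).support, (f i ^ (α b i)).totalDegree :=
          totalDegree_finset_prod _ _
      _ ≤ ∑ i ∈ (α b).support, (α b i) * 2 := by
          refine Finset.sum_le_sum fun i _ => ?_
          exact le_trans (totalDegree_pow _ _) (Nat.mul_le_mul_left _ (hdeg i))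
      _ = ((α b).sum fun _ e => e) * 2 := by rw [Finsupp.sum, Finset.sum_mul]
      _ ≤ 2 * t := by rw [mul_comm]; exact Nat.mul_le_mul_left _ (hαsum b)
  -- g lands in restrictDegree σ ℂ (2*t)
  have hmem : ∀ b, g b ∈ restrictDegree σ ℂ (2 * t) := fun b =>
    restrictTotalDegree_le_restrictDegree σ ℂ (2 * t)
      ((mem_restrictTotalDegree σ _ _).mpr (hgdeg b))
  -- finrank of restrictDegree is (2t+1)^n
  have e : {q : σ →₀ ℕ | ∀ i, q i ≤ 2 * t} ≃ (σ → Fin (2 * t + 1)) :=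
    { toFun := fun q i => ⟨q.1 i, Nat.lt_succ_of_le (q.2 i)⟩
      invFun := fun h => ⟨Finsupp.equivFunOnFinite.symm fun i => (h i : ℕ),
        fun i => by simpa using Fin.is_le (h i)⟩
      left_inv := fun q => by
        ext i
        simp
      right_inv := fun h => by
        funext i
        ext
        simp }
  have hfr : Module.finrank ℂ (restrictDegree σ ℂ (2 * t)) = (2 * t + 1) ^ n := by
    haveI : Fintype {q : σ →₀ ℕ | ∀ i, q i ≤ 2 * t} := Fintype.ofEquiv _ e.symm
    rw [show restrictDegree σ ℂ (2 * t) =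
        restrictSupport ℂ {q : σ →₀ ℕ | ∀ i, q i ≤ 2 * t} from rfl,
      Module.finrank_eq_card_basis (basisRestrictSupport ℂ _), Fintype.card_congr e]
    simp [hn]
  -- not linearly independent by cardinality
  have hni : ¬ LinearIndependent ℂ
      (fun b : τ → Fin (s + 1) => (⟨g b, hmem b⟩ : restrictDegree σ ℂ (2 * t))) := by
    intro hli
    have hle := hli.fintype_card_le_finrank
    rw [hfr, Fintype.card_fun] at hle
    simp only [Fintype.card_fin, ← hm] at hle
    -- (s+1)^m ≤ (2t+1)^n is a contradiction
    have h1 : 2 * t + 1 ≤ (2 * m + 1) * (s + 1) := by simp only [ht]; nlinarith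
    have h2 : ((2 : ℕ) * t + 1) ^ n ≤ ((2 * m + 1) * (s + 1)) ^ n :=
      Nat.pow_le_pow_left h1 n
    have h3 : ((2 * m + 1) * (s + 1)) ^ n = s * (s + 1) ^ n := by
      rw [mul_pow, hs]
    have h4 : s * (s + 1) ^ n < (s + 1) ^ (n + 1) := by
      rw [pow_succ, mul_comm ((s+1)^n) (s+1)]
      exact Nat.mul_lt_mul_of_lt_of_le (Nat.lt_succ_self s) (le_refl _)
        (Nat.pow_pos (Nat.succ_pos s))
    have h5 : (s + 1) ^ (n + 1) ≤ (s + 1) ^ m :=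
      Nat.pow_le_pow_right (Nat.succ_le_succ (Nat.zero_le s)) hcard
    omega
  -- extract a nontrivial relation
  obtain ⟨c, hsum, b₀, hb₀⟩ := Fintype.not_linearIndependent_iff.mp hni
  refine ⟨∑ b, c b • MvPolynomial.monomial (α b) (1:ℂ), ?_, ?_⟩
  · intro h0
    apply hb₀
    have := congrArg (MvPolynomial.coeff (α b₀)) h0
    simp only [MvPolynomial.coeff_sum, MvPolynomial.coeff_smul,
      MvPolynomial.coeff_monomial, MvPolynomial.coeff_zero] at this
    rw [Finset.sum_eq_single b₀] at this
    · simpa using this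
    · intro b _ hb
      rw [if_neg (fun h => hb (hαinj h)), smul_zero]
    · intro h; exact absurd (Finset.mem_univ b₀) h
  · have := congrArg (Submodule.subtype (restrictDegree σ ℂ (2 * t))) hsum
    simp only [map_sum, _root_.map_smul, Submodule.coe_subtype, Submodule.coe_smul,
      ZeroMemClass.coe_zero] at this
    rw [map_sum]
    simpa only [_root_.map_smul, hg] using this

theorem stmt_1 (K : ℕ) (hK : 2 ≤ K) (M N d : Fin K → ℕ)
    (hd1 : ∀ k, 1 ≤ d k) (hdM : ∀ k, d k ≤ M k) (hdN : ∀ k, d k ≤ N k)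
    (I : Finset (Fin K × Fin K)) (hIJ : ∀ q ∈ I, q.1 ≠ q.2)
    (hcount : ∑ k ∈ I.image Prod.fst, (N k - d k) * d k
        + ∑ j ∈ I.image Prod.snd, (M j - d j) * d j
      < ∑ q ∈ I, d q.1 * d q.2)
    (H2 : ∀ q : Fin K × Fin K, q ∈ I → Matrix (Fin (d q.1)) (Fin (M q.2 - d q.2)) ℂ)
    (H3 : ∀ q : Fin K × Fin K, q ∈ I → Matrix (Fin (N q.1 - d q.1)) (Fin (d q.2)) ℂ)
    (H4 : ∀ q : Fin K × Fin K, q ∈ I →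
      Matrix (Fin (N q.1 - d q.1)) (Fin (M q.2 - d q.2)) ℂ) :
    ∃ p : MvPolynomial
        (Σ q : {q : Fin K × Fin K // q ∈ I}, Fin (d q.1.1) × Fin (d q.1.2)) ℂ,
      p ≠ 0 ∧
      ∀ H1 : ∀ q : Fin K × Fin K, q ∈ I → Matrix (Fin (d q.1)) (Fin (d q.2)) ℂ,
        (∃ (Ubar : ∀ k, Matrix (Fin (N k - d k)) (Fin (d k)) ℂ)
           (Vbar : ∀ k, Matrix (Fin (M k - d k)) (Fin (d k)) ℂ),
          ∀ q (hq : q ∈ I),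
            H1 q hq + (Ubar q.1)ᴴ * H3 q hq + H2 q hq * Vbar q.2
              + (Ubar q.1)ᴴ * H4 q hq * Vbar q.2 = 0) →
        MvPolynomial.eval (fun v => H1 v.1.1 v.1.2 v.2.1 v.2.2) p = 0 := by
  classical
  have hcards : Fintype.card ((Σ k : {k : Fin K // k ∈ I.image Prod.fst},
        Fin (d k.1) × Fin (N k.1 - d k.1)) ⊕
      (Σ j : {j : Fin K // j ∈ I.image Prod.snd},
        Fin (M j.1 - d j.1) × Fin (d j.1)))
      < Fintype.card (Σ q : {q : Fin K × Fin K // q ∈ I},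
        Fin (d q.1.1) × Fin (d q.1.2)) := by
    have h1 : Fintype.card (Σ q : {q : Fin K × Fin K // q ∈ I},
        Fin (d q.1.1) × Fin (d q.1.2)) = ∑ q ∈ I, d q.1 * d q.2 := by
      rw [Fintype.card_sigma, ← Finset.sum_coe_sort I (fun q => d q.1 * d q.2)]
      simp
    have h2 : Fintype.card ((Σ k : {k : Fin K // k ∈ I.image Prod.fst},
          Fin (d k.1) × Fin (N k.1 - d k.1)) ⊕
        (Σ j : {j : Fin K // j ∈ I.image Prod.snd},
          Fin (M j.1 - d j.1) × Fin (d j.1)))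
        = ∑ k ∈ I.image Prod.fst, d k * (N k - d k)
          + ∑ j ∈ I.image Prod.snd, (M j - d j) * d j := by
      rw [Fintype.card_sum, Fintype.card_sigma, Fintype.card_sigma,
        ← Finset.sum_coe_sort (I.image Prod.fst) (fun k => d k * (N k - d k)),
        ← Finset.sum_coe_sort (I.image Prod.snd) (fun j => (M j - d j) * d j)]
      simp
    rw [h1, h2]
    have : ∑ k ∈ I.image Prod.fst, d k * (N k - d k)
        = ∑ k ∈ I.image Prod.fst, (N k - d k) * d k :=
      Finset.sum_congr rfl fun k _ => mul_comm _ _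
    omega
  set f : (Σ q : {q : Fin K × Fin K // q ∈ I}, Fin (d q.1.1) × Fin (d q.1.2)) →
      MvPolynomial ((Σ k : {k : Fin K // k ∈ I.image Prod.fst},
        Fin (d k.1) × Fin (N k.1 - d k.1)) ⊕
      (Σ j : {j : Fin K // j ∈ I.image Prod.snd},
        Fin (M j.1 - d j.1) × Fin (d j.1))) ℂ := fun v =>
    -((∑ l, MvPolynomial.X (Sum.inl ⟨⟨v.1.1.1, Finset.mem_image_of_mem Prod.fst v.1.2⟩,
          (v.2.1, l)⟩) * MvPolynomial.C (H3 v.1.1 v.1.2 l v.2.2))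
      + (∑ l, MvPolynomial.C (H2 v.1.1 v.1.2 v.2.1 l)
          * MvPolynomial.X (Sum.inr ⟨⟨v.1.1.2, Finset.mem_image_of_mem Prod.snd v.1.2⟩,
          (l, v.2.2)⟩))
      + ∑ l, ∑ l', MvPolynomial.X (Sum.inl ⟨⟨v.1.1.1,
            Finset.mem_image_of_mem Prod.fst v.1.2⟩, (v.2.1, l)⟩)
          * MvPolynomial.C (H4 v.1.1 v.1.2 l l')
          * MvPolynomial.X (Sum.inr ⟨⟨v.1.1.2,
            Finset.mem_image_of_mem Prod.snd v.1.2⟩, (l', v.2.2)⟩)) with hf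
  have hdeg : ∀ v, (f v).totalDegree ≤ 2 := by
    intro v
    rw [hf]
    rw [MvPolynomial.totalDegree_neg]
    refine le_trans (MvPolynomial.totalDegree_add _ _) (max_le
      (le_trans (MvPolynomial.totalDegree_add _ _) (max_le ?_ ?_)) ?_) <;>
      refine le_trans (MvPolynomial.totalDegree_finset_sum _ _) (Finset.sup_le fun l _ => ?_)
    · exact le_trans (MvPolynomial.totalDegree_mul _ _) (by
        simp [MvPolynomial.totalDegree_X, MvPolynomial.totalDegree_C])
    · exact le_trans (MvPolynomial.totalDegree_mul _ _) (by
        simp [MvPolynomial.totalDegree_X, MvPolynomial.totalDegree_C])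
    · refine le_trans (MvPolynomial.totalDegree_finset_sum _ _)
        (Finset.sup_le fun l' _ => ?_)
      refine le_trans (MvPolynomial.totalDegree_mul _ _) ?_
      refine le_trans (add_le_add (MvPolynomial.totalDegree_mul _ _) le_rfl) ?_
      simp [MvPolynomial.totalDegree_X, MvPolynomial.totalDegree_C]
  obtain ⟨p, hp0, hpf⟩ := key_dep f hdeg hcards
  refine ⟨p, hp0, ?_⟩
  rintro H1 ⟨Ubar, Vbar, heq⟩
  set x : ((Σ k : {k : Fin K // k ∈ I.image Prod.fst},
        Fin (d k.1) × Fin (N k.1 - d k.1)) ⊕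
      (Σ j : {j : Fin K // j ∈ I.image Prod.snd},
        Fin (M j.1 - d j.1) × Fin (d j.1))) → ℂ := fun z =>
    Sum.rec (fun w => star (Ubar w.1.1 w.2.2 w.2.1)) (fun w => Vbar w.1.1 w.2.1 w.2.2) z
    with hx
  have hev : ∀ v : (Σ q : {q : Fin K × Fin K // q ∈ I},
      Fin (d q.1.1) × Fin (d q.1.2)),
      MvPolynomial.eval x (f v) = H1 v.1.1 v.1.2 v.2.1 v.2.2 := by
    intro v
    have h0 : (H1 v.1.1 v.1.2 + (Ubar v.1.1.1)ᴴ * H3 v.1.1 v.1.2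
        + H2 v.1.1 v.1.2 * Vbar v.1.1.2
        + (Ubar v.1.1.1)ᴴ * H4 v.1.1 v.1.2 * Vbar v.1.1.2) v.2.1 v.2.2
        = (0 : Matrix (Fin (d v.1.1.1)) (Fin (d v.1.1.2)) ℂ) v.2.1 v.2.2 := by
      rw [heq v.1.1 v.1.2]
    simp only [Matrix.add_apply, Matrix.zero_apply, Matrix.mul_apply,
      Matrix.conjTranspose_apply] at h0
    simp only [Finset.sum_mul] at h0
    rw [Finset.sum_comm] at h0
    rw [hf]
    simp only [map_neg, map_add, map_sum, _root_.map_mul, MvPolynomial.eval_X,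
      MvPolynomial.eval_C, hx]
    linear_combination -h0
  have hcomp : ∀ pp : MvPolynomial (Σ q : {q : Fin K × Fin K // q ∈ I},
      Fin (d q.1.1) × Fin (d q.1.2)) ℂ,
      MvPolynomial.eval (fun v => MvPolynomial.eval x (f v)) pp
        = MvPolynomial.eval x (MvPolynomial.aeval f pp) := by
    intro pp
    induction pp using MvPolynomial.induction_on with
    | C a => simp
    | add p q hp hq => simp only [map_add, hp, hq]
    | mul_X p i hp => simp only [_root_.map_mul, MvPolynomial.aeval_X,
        MvPolynomial.eval_X, hp]
  rw [show (fun v : (Σ q : {q : Fin K × Fin K // q ∈ I},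
        Fin (d q.1.1) × Fin (d q.1.2)) => H1 v.1.1 v.1.2 v.2.1 v.2.2)
    = fun v => MvPolynomial.eval x (f v) from funext fun v => (hev v).symm,
    hcomp, hpf, map_zero]
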